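/- Let β : [a,b] → ℝ² be a regular C² curve that is n-convex. Then β is a finite concatenation of sub-spirals, i.e. there exist a = s₀ < s₁ < … < s_m = b such that each restriction β|[s_j, s_{j+1}] is a C² curve with no self-intersections whose signed curvature does not change sign. -/

import Mathlib

open Set

noncomputable section

/-- A continuous planar curve `β : [a,b] → ℝ²` is `n`-convex if `[a,b]` can be split
into `n` consecutive subintervals on each of which the image of `β` lies in the
boundary of a convex set. -/
def NConvex (β : ℝ → EuclideanSpace ℝ (Fin 2)) (a b : ℝ) (n : ℕ) : Prop :=
  ∃ t : Fin (n + 1) → ℝ, StrictMono t ∧ t 0 = a ∧ t (Fin.last n) = b ∧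
    ∀ j : Fin n, ∃ A : Set (EuclideanSpace ℝ (Fin 2)), Convex ℝ A ∧
      β '' Icc (t j.castSucc) (t j.succ) ⊆ frontier A

/-- The numerator `x'y'' − y'x''` of the signed curvature of a planar curve. -/
def curvDet (β : ℝ → EuclideanSpace ℝ (Fin 2)) (u : ℝ) : ℝ :=
  deriv β u 0 * deriv (deriv β) u 1 - deriv β u 1 * deriv (deriv β) u 0


/-- Algebraic core: if `ν ⊥ w`, `⟪ν,p⟫ < 0`, `⟪ν,z⟫ ≤ 0` and `w ≠ 0` (in ℝ²-coordinates),
then the determinant `H = w₀p₁ − w₁p₀` is nonzero and its sign controls the sign of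
`F = w₀z₁ − w₁z₀`. -/
lemma aux_sign (n0 n1 w0 w1 p0 p1 z0 z1 : ℝ)
    (hw : 0 < w0 ^ 2 + w1 ^ 2)
    (horth : n0 * w0 + n1 * w1 = 0)
    (hp : n0 * p0 + n1 * p1 < 0)
    (hz : n0 * z0 + n1 * z1 ≤ 0) :
    (w0 * p1 - w1 * p0 ≠ 0) ∧
      (0 < w0 * p1 - w1 * p0 → 0 ≤ w0 * z1 - w1 * z0) ∧
      (w0 * p1 - w1 * p0 < 0 → w0 * z1 - w1 * z0 ≤ 0) := by
  set lam : ℝ := (n1 * w0 - n0 * w1) / (w0 ^ 2 + w1 ^ 2) with hlam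
  have h0 : n0 = -lam * w1 := by
    have hne : w0 ^ 2 + w1 ^ 2 ≠ 0 := hw.ne'
    rw [hlam, eq_comm, neg_mul, div_mul_eq_mul_div, neg_eq_iff_eq_neg, div_eq_iff hne]
    linear_combination w0 * horth
  have h1 : n1 = lam * w0 := by
    have hne : w0 ^ 2 + w1 ^ 2 ≠ 0 := hw.ne'
    rw [hlam, eq_comm, div_mul_eq_mul_div, div_eq_iff hne]
    linear_combination -w1 * horth
  have hpe : n0 * p0 + n1 * p1 = lam * (w0 * p1 - w1 * p0) := by rw [h0, h1]; ring
  have hze : n0 * z0 + n1 * z1 = lam * (w0 * z1 - w1 * z0) := by rw [h0, h1]; ring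
  rw [hpe] at hp
  rw [hze] at hz
  have hlamne : lam ≠ 0 := by
    intro h; rw [h] at hp; simp at hp
  refine ⟨?_, ?_, ?_⟩
  · rintro h; rw [h] at hp; simp at hp
  · intro hH
    have hlneg : lam < 0 := by nlinarith
    nlinarith
  · intro hH
    have hlpos : 0 < lam := by nlinarith
    nlinarith

/-- Extend a sign condition from the open interval to the closed one by continuity. -/
lemma sign_extend {F : ℝ → ℝ} {c d : ℝ} (hcd : c < d)
    (hF : ContinuousOn F (Icc c d)) (h : ∀ u ∈ Ioo c d, 0 ≤ F u) :
    ∀ u ∈ Icc c d, 0 ≤ F u := by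
  intro u hu
  have hucl : u ∈ closure (Ioo c d) := by
    rw [closure_Ioo hcd.ne]; exact hu
  have : (nhdsWithin u (Ioo c d)).NeBot := mem_closure_iff_nhdsWithin_neBot.1 hucl
  have hct : Filter.Tendsto F (nhdsWithin u (Ioo c d)) (nhds (F u)) :=
    (hF u hu).mono Ioo_subset_Icc_self
  exact ge_of_tendsto hct (Filter.eventually_of_mem self_mem_nhdsWithin h)

/-- Second-order condition at a (one-sided) interior maximum. -/
lemma deriv2_le_zero {φ ψ : ℝ → ℝ} {u d K : ℝ} (hud : u < d)
    (hφ : ∀ t ∈ Ico u d, HasDerivAt φ (ψ t) t)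
    (hψ0 : ψ u = 0) (hψ : HasDerivAt ψ K u)
    (hmax : ∀ t ∈ Icc u d, φ t ≤ φ u) : K ≤ 0 := by
  by_contra hK
  push_neg at hK
  have hslope := hasDerivAt_iff_tendsto_slope.1 hψ
  have hev : ∀ᶠ t in nhdsWithin u {u}ᶜ, 0 < slope ψ u t :=
    hslope.eventually (eventually_gt_nhds hK)
  have hev' : ∀ᶠ t in nhdsWithin u (Ioi u), 0 < ψ t := by
    have : nhdsWithin u (Ioi u) ≤ nhdsWithin u {u}ᶜ :=
      nhdsWithin_mono u (fun x hx => ne_of_gt hx)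
    filter_upwards [this hev, self_mem_nhdsWithin] with t ht htu
    have htu' : (0:ℝ) < t - u := sub_pos.2 htu
    have : slope ψ u t = ψ t / (t - u) := by
      rw [slope_def_field, hψ0]; ring
    rw [this] at ht
    have := mul_pos ht htu'
    rwa [div_mul_cancel₀ _ (ne_of_gt htu')] at this
  have hmem : {t : ℝ | 0 < ψ t} ∈ nhdsWithin u (Ioi u) := hev'
  rw [mem_nhdsGT_iff_exists_Ioo_subset] at hmem
  obtain ⟨u', hu', hsub⟩ := hmem
  set d' : ℝ := min u' d with hd'
  have hud' : u < d' := lt_min hu' hud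
  set d'' : ℝ := (u + d') / 2 with hd''
  have h1 : u < d'' := by rw [hd'']; linarith
  have h2 : d'' < d' := by rw [hd'']; linarith
  have hsubIco : Icc u d'' ⊆ Ico u d := fun t ht =>
    ⟨ht.1, lt_of_le_of_lt ht.2 (lt_of_lt_of_le h2 (min_le_right _ _))⟩
  have hmono : StrictMonoOn φ (Icc u d'') := by
    apply strictMonoOn_of_deriv_pos (convex_Icc u d'')
    · intro t ht
      exact (hφ t (hsubIco ht)).continuousAt.continuousWithinAt
    · intro t ht
      rw [interior_Icc] at ht
      rw [(hφ t (hsubIco ⟨ht.1.le, ht.2.le⟩)).deriv]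
      exact hsub ⟨ht.1, lt_of_lt_of_le (lt_trans ht.2 h2) (min_le_left _ _)⟩
  have : φ u < φ d'' := hmono ⟨le_refl u, h1.le⟩ ⟨h1.le, le_refl _⟩ h1
  have : φ d'' ≤ φ u := hmax d'' ⟨h1.le, (lt_of_lt_of_le h2 (min_le_right _ _)).le⟩
  linarith


abbrev E2 := EuclideanSpace ℝ (Fin 2)

variable {a b : ℝ} {β : ℝ → E2}

lemma heq_deriv (hab : a < b) (hreg : ∀ u ∈ Icc a b, deriv β u ≠ 0) :
    ∀ u ∈ Icc a b, derivWithin β (Icc a b) u = deriv β u := fun u hu =>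
  (differentiableAt_of_deriv_ne_zero (hreg u hu)).derivWithin (uniqueDiffOn_Icc hab u hu)

lemma hf1cont (hab : a < b) (hC2 : ContDiffOn ℝ 2 β (Icc a b)) :
    ContinuousOn (derivWithin β (Icc a b)) (Icc a b) :=
  hC2.continuousOn_derivWithin (uniqueDiffOn_Icc hab) (by norm_num)

lemma hC1f1 (hab : a < b) (hC2 : ContDiffOn ℝ 2 β (Icc a b)) :
    ContDiffOn ℝ 1 (derivWithin β (Icc a b)) (Icc a b) :=
  hC2.derivWithin (uniqueDiffOn_Icc hab) (by norm_num)

lemma hf2cont (hab : a < b) (hC2 : ContDiffOn ℝ 2 β (Icc a b)) :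
    ContinuousOn (derivWithin (derivWithin β (Icc a b)) (Icc a b)) (Icc a b) :=
  (hC1f1 hab hC2).continuousOn_derivWithin (uniqueDiffOn_Icc hab) le_rfl

lemma hder1 (hab : a < b) (hreg : ∀ u ∈ Icc a b, deriv β u ≠ 0) :
    ∀ u ∈ Ioo a b, HasDerivAt β (derivWithin β (Icc a b) u) u := by
  intro u hu
  rw [heq_deriv hab hreg u (Ioo_subset_Icc_self hu)]
  exact (differentiableAt_of_deriv_ne_zero (hreg u (Ioo_subset_Icc_self hu))).hasDerivAt

lemma hder2 (hab : a < b) (hC2 : ContDiffOn ℝ 2 β (Icc a b)) :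
    ∀ u ∈ Ioo a b, HasDerivAt (derivWithin β (Icc a b))
      (derivWithin (derivWithin β (Icc a b)) (Icc a b) u) u := by
  intro u hu
  have h := ((hC1f1 hab hC2).differentiableOn one_ne_zero u
    (Ioo_subset_Icc_self hu)).hasDerivWithinAt
  exact h.hasDerivAt (Icc_mem_nhds hu.1 hu.2)

lemma hcurv (hab : a < b) (hC2 : ContDiffOn ℝ 2 β (Icc a b))
    (hreg : ∀ u ∈ Icc a b, deriv β u ≠ 0) :
    ∀ u ∈ Icc a b,
      curvDet β u =
        derivWithin β (Icc a b) u 0 * derivWithin (derivWithin β (Icc a b)) (Icc a b) u 1 -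
          derivWithin β (Icc a b) u 1 * derivWithin (derivWithin β (Icc a b)) (Icc a b) u 0 ∨
      curvDet β u = 0 := by
  intro u hu
  by_cases h : DifferentiableAt ℝ (deriv β) u
  · left
    have e1 : deriv (deriv β) u = derivWithin (deriv β) (Icc a b) u :=
      (h.derivWithin (uniqueDiffOn_Icc hab u hu)).symm
    have e2 : derivWithin (deriv β) (Icc a b) u = derivWithin (derivWithin β (Icc a b)) (Icc a b) u :=
      derivWithin_congr (fun t ht => (heq_deriv hab hreg t ht).symm)
        ((heq_deriv hab hreg u hu).symm)
    rw [curvDet, e1, e2, heq_deriv hab hreg u hu]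
  · right
    rw [curvDet, deriv_zero_of_not_differentiableAt h]
    simp

lemma comp_cont {f : ℝ → E2} {s : Set ℝ} (hf : ContinuousOn f s) (i : Fin 2) :
    ContinuousOn (fun u => f u i) s := by
  have := (EuclideanSpace.proj (𝕜 := ℝ) i).continuous.comp_continuousOn hf
  simpa [Function.comp_def] using this

lemma clm_coords (f : E2 →L[ℝ] ℝ) : ∃ ν : E2, ∀ x : E2, f x = ν 0 * x 0 + ν 1 * x 1 := by
  refine ⟨(InnerProductSpace.toDual ℝ E2).symm f, fun x => ?_⟩
  have h := InnerProductSpace.toDual_symm_apply (𝕜 := ℝ) (E := E2) (x := x) (y := f)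
  rw [← h, PiLp.inner_apply]
  simp [Fin.sum_univ_two, RCLike.inner_apply]
  ring

lemma E2_ne_zero {v : E2} (hv : v ≠ 0) : v 0 ≠ 0 ∨ v 1 ≠ 0 := by
  by_contra hcon
  push_neg at hcon
  exact hv (by ext i; fin_cases i <;> simp [hcon.1, hcon.2])

lemma E2_sq_pos {v : E2} (hv : v ≠ 0) : 0 < v 0 ^ 2 + v 1 ^ 2 := by
  rcases E2_ne_zero hv with h | h
  · have : 0 < v 0 ^ 2 := by positivity
    nlinarith [sq_nonneg (v 1)]
  · have : 0 < v 1 ^ 2 := by positivity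
    nlinarith [sq_nonneg (v 0)]

set_option maxHeartbeats 1000000 in
/-- Sign-constancy of the curvature determinant on a convex arc. -/
lemma curv_sign (hab : a < b) (hC2 : ContDiffOn ℝ 2 β (Icc a b))
    (hreg : ∀ u ∈ Icc a b, deriv β u ≠ 0)
    {c d : ℝ} (hac : a ≤ c) (hcd : c < d) (hdb : d ≤ b)
    {A : Set E2} (hA : Convex ℝ A) (hfr : ∀ t ∈ Icc c d, β t ∈ frontier A) :
    (∀ u ∈ Icc c d, 0 ≤ curvDet β u) ∨ (∀ u ∈ Icc c d, curvDet β u ≤ 0) := by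
  set f1 : ℝ → E2 := derivWithin β (Icc a b) with hf1def
  set f2 : ℝ → E2 := derivWithin f1 (Icc a b) with hf2def
  set Fn : ℝ → ℝ := fun u => f1 u 0 * f2 u 1 - f1 u 1 * f2 u 0 with hFndef
  have hIccsub : Icc c d ⊆ Icc a b := Icc_subset_Icc hac hdb
  have hIoosub : Ioo c d ⊆ Ioo a b := Ioo_subset_Ioo hac hdb
  have hf1c : ContinuousOn f1 (Icc a b) := hf1cont hab hC2
  have hf2c : ContinuousOn f2 (Icc a b) := hf2cont hab hC2
  have hFnCont : ContinuousOn Fn (Icc c d) := by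
    apply ContinuousOn.sub
    · exact ((comp_cont hf1c 0).mono hIccsub).mul ((comp_cont hf2c 1).mono hIccsub)
    · exact ((comp_cont hf1c 1).mono hIccsub).mul ((comp_cont hf2c 0).mono hIccsub)
  have hf1ne : ∀ u ∈ Icc a b, f1 u ≠ 0 := by
    intro u hu
    rw [hf1def, heq_deriv hab hreg u hu]
    exact hreg u hu
  -- reduce to sign of Fn on the open interval
  have main : (∀ u ∈ Ioo c d, 0 ≤ Fn u) ∨ (∀ u ∈ Ioo c d, Fn u ≤ 0) → 
      (∀ u ∈ Icc c d, 0 ≤ curvDet β u) ∨ (∀ u ∈ Icc c d, curvDet β u ≤ 0) := by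
    rintro (hs | hs)
    · left
      have hIcc := sign_extend hcd hFnCont hs
      intro u hu
      rcases hcurv hab hC2 hreg u (hIccsub hu) with he | he
      · rw [he]; exact hIcc u hu
      · rw [he]
    · right
      have hIcc := sign_extend hcd hFnCont.neg (fun u hu => neg_nonneg.2 (hs u hu))
      intro u hu
      rcases hcurv hab hC2 hreg u (hIccsub hu) with he | he
      · rw [he]
        exact neg_nonneg.1 (hIcc u hu)
      · rw [he]
  apply main
  by_cases hint : (interior A).Nonempty
  · -- nonempty interior: supporting hyperplane argument
    obtain ⟨x₀, hx₀⟩ := hint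
    set h : ℝ → ℝ := fun u => f1 u 0 * (x₀ 1 - β u 1) - f1 u 1 * (x₀ 0 - β u 0) with hhdef
    have hkey : ∀ u ∈ Ioo c d, h u ≠ 0 ∧ (0 < h u → 0 ≤ Fn u) ∧ (h u < 0 → Fn u ≤ 0) := by
      intro u hu
      have hufr : β u ∈ frontier A := hfr u (Ioo_subset_Icc_self hu)
      have hnotint : β u ∉ interior A := hufr.2
      obtain ⟨f, hf⟩ := geometric_hahn_banach_open_point hA.interior isOpen_interior hnotint
      have hcl : ∀ y ∈ closure A, f y ≤ f (β u) := by
        intro y hy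
        have T : Filter.Tendsto (fun θ : ℝ => θ * f x₀ + (1 - θ) * f y)
            (nhdsWithin 0 (Ioi 0)) (nhds (f y)) := by
          have hco : Continuous (fun θ : ℝ => θ * f x₀ + (1 - θ) * f y) := by continuity
          have h0 : Filter.Tendsto (fun θ : ℝ => θ * f x₀ + (1 - θ) * f y) (nhds 0)
              (nhds (f y)) := by simpa using hco.tendsto 0
          exact h0.mono_left nhdsWithin_le_nhds
        apply le_of_tendsto T
        have hmemIoo : Ioo (0:ℝ) 1 ∈ nhdsWithin (0:ℝ) (Ioi 0) :=
          Ioo_mem_nhdsGT zero_lt_one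
        filter_upwards [hmemIoo] with θ hθ
        have hz : θ • x₀ + (1 - θ) • y ∈ interior A :=
          hA.combo_interior_closure_mem_interior hx₀ hy hθ.1 (by linarith [hθ.2]) (by ring)
        have := hf _ hz
        calc θ * f x₀ + (1 - θ) * f y = f (θ • x₀ + (1 - θ) • y) := by
              rw [map_add, map_smul, map_smul]; simp [smul_eq_mul]
          _ ≤ f (β u) := this.le
      have hmaxφ : ∀ t ∈ Icc c d, f (β t) ≤ f (β u) := fun t ht =>
        hcl _ (frontier_subset_closure (hfr t ht))
      have hder : HasDerivAt (fun t => f (β t)) (f (f1 u)) u :=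
        f.hasFDerivAt.comp_hasDerivAt u (hder1 hab hreg u (hIoosub hu))
      have hloc : IsLocalMax (fun t => f (β t)) u :=
        Filter.eventually_of_mem (Icc_mem_nhds hu.1 hu.2) hmaxφ
      have hfirst : f (f1 u) = 0 := hloc.hasDerivAt_eq_zero hder
      have hsecond : f (f2 u) ≤ 0 := by
        apply deriv2_le_zero (hu.2) _ hfirst
          (f.hasFDerivAt.comp_hasDerivAt u (hder2 hab hC2 u (hIoosub hu)))
          (fun t ht => hmaxφ t ⟨le_trans hu.1.le ht.1, ht.2⟩)
        intro t ht
        have htIoo : t ∈ Ioo a b := ⟨lt_of_le_of_lt hac (lt_of_lt_of_le hu.1 ht.1),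
          lt_of_lt_of_le ht.2 hdb⟩
        exact f.hasFDerivAt.comp_hasDerivAt t (hder1 hab hreg t htIoo)
      obtain ⟨ν, hν⟩ := clm_coords f
      have hw : 0 < f1 u 0 ^ 2 + f1 u 1 ^ 2 := E2_sq_pos (hf1ne u (Ioo_subset_Icc_self (hIoosub hu)))
      have horth : ν 0 * f1 u 0 + ν 1 * f1 u 1 = 0 := by rw [← hν]; exact hfirst
      have hp : ν 0 * (x₀ 0 - β u 0) + ν 1 * (x₀ 1 - β u 1) < 0 := by
        have h1 : f (x₀ - β u) < 0 := by
          rw [map_sub]; linarith [hf x₀ hx₀]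
        rw [hν] at h1
        simpa using h1
      have hz : ν 0 * f2 u 0 + ν 1 * f2 u 1 ≤ 0 := by rw [← hν]; exact hsecond
      have := aux_sign (ν 0) (ν 1) (f1 u 0) (f1 u 1) (x₀ 0 - β u 0) (x₀ 1 - β u 1)
        (f2 u 0) (f2 u 1) hw horth hp hz
      exact this
    -- continuity of h
    have hhCont : ContinuousOn h (Icc c d) := by
      apply ContinuousOn.sub
      · exact ((comp_cont hf1c 0).mono hIccsub).mul
          (continuousOn_const.sub ((comp_cont hC2.continuousOn 1).mono hIccsub))
      · exact ((comp_cont hf1c 1).mono hIccsub).mul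
          (continuousOn_const.sub ((comp_cont hC2.continuousOn 0).mono hIccsub))
    -- dichotomy on the sign of h
    set u₀ : ℝ := (c + d) / 2 with hu₀def
    have hu₀ : u₀ ∈ Ioo c d := ⟨by rw [hu₀def]; linarith, by rw [hu₀def]; linarith⟩
    have hsame : ∀ v ∈ Ioo c d, 0 < h u₀ → 0 < h v := by
      intro v hv hpos
      by_contra hcon
      push_neg at hcon
      have hvne := (hkey v hv).1
      have hvneg : h v < 0 := lt_of_le_of_ne hcon hvne
      have hsub : uIcc u₀ v ⊆ Ioo c d := (Set.ordConnected_Ioo).uIcc_subset hu₀ hv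
      have h0mem : (0:ℝ) ∈ uIcc (h u₀) (h v) := by
        rw [Set.mem_uIcc]; right; exact ⟨hvneg.le, hpos.le⟩
      obtain ⟨w, hwmem, hw0⟩ := intermediate_value_uIcc
        (hhCont.mono (hsub.trans Ioo_subset_Icc_self)) h0mem
      exact (hkey w (hsub hwmem)).1 hw0
    have hsame' : ∀ v ∈ Ioo c d, h u₀ < 0 → h v < 0 := by
      intro v hv hneg
      by_contra hcon
      push_neg at hcon
      have hvne := (hkey v hv).1
      have hvpos : 0 < h v := lt_of_le_of_ne hcon (Ne.symm hvne)
      have hsub : uIcc u₀ v ⊆ Ioo c d := (Set.ordConnected_Ioo).uIcc_subset hu₀ hv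
      have h0mem : (0:ℝ) ∈ uIcc (h u₀) (h v) := by
        rw [Set.mem_uIcc]; left; exact ⟨hneg.le, hvpos.le⟩
      obtain ⟨w, hwmem, hw0⟩ := intermediate_value_uIcc
        (hhCont.mono (hsub.trans Ioo_subset_Icc_self)) h0mem
      exact (hkey w (hsub hwmem)).1 hw0
    rcases lt_or_gt_of_ne ((hkey u₀ hu₀).1) with hneg | hpos
    · right
      intro v hv
      exact (hkey v hv).2.2 (hsame' v hv hneg)
    · left
      intro v hv
      exact (hkey v hv).2.1 (hsame v hv hpos)
  · -- empty interior : the curve lies on a line, Fn ≡ 0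
    left
    have hAne : A.Nonempty := by
      by_contra hA0
      rw [Set.not_nonempty_iff_eq_empty] at hA0
      have := hfr c ⟨le_refl c, hcd.le⟩
      rw [hA0, frontier_empty] at this
      exact this
    have hspan : affineSpan ℝ A ≠ ⊤ := by
      intro htop
      exact hint (hA.interior_nonempty_iff_affineSpan_eq_top.2 htop)
    have hdir : (affineSpan ℝ A).direction ≠ ⊤ := by
      intro htop
      exact hspan ((AffineSubspace.direction_eq_top_iff_of_nonempty
        ((affineSpan_nonempty ℝ).2 hAne)).1 htop)
    have hbot : ((affineSpan ℝ A).direction)ᗮ ≠ ⊥ := by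
      intro hb
      exact hdir (Submodule.orthogonal_eq_bot_iff.1 hb)
    obtain ⟨ν, hνmem, hνne⟩ := Submodule.exists_mem_ne_zero_of_ne_bot hbot
    have hβspan : ∀ t ∈ Icc c d, β t ∈ affineSpan ℝ A := by
      intro t ht
      have h1 : β t ∈ closure A := frontier_subset_closure (hfr t ht)
      have h2 : closure A ⊆ closure (affineSpan ℝ A : Set E2) :=
        closure_mono (subset_affineSpan ℝ A)
      have h3 : IsClosed (affineSpan ℝ A : Set E2) := by
        haveI : Nonempty (affineSpan ℝ A) :=
          ((affineSpan_nonempty ℝ).2 hAne).to_subtype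
        exact (affineSpan ℝ A).closed_of_finiteDimensional
      rw [h3.closure_eq] at h2
      exact h2 h1
    have hinner : ∀ t ∈ Icc c d, ∀ t' ∈ Icc c d,
        (inner ℝ (β t - β t') ν : ℝ) = 0 := by
      intro t ht t' ht'
      have hmem : β t - β t' ∈ (affineSpan ℝ A).direction := by
        have := AffineSubspace.vsub_mem_direction (hβspan t ht) (hβspan t' ht')
        simpa using this
      exact (Submodule.mem_orthogonal _ ν).1 hνmem _ hmem
    -- inner with ν of β is constant; differentiate twice
    set fℓ : E2 →L[ℝ] ℝ := innerSL ℝ ν with hfℓ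
    have hν : ∀ x : E2, fℓ x = ν 0 * x 0 + ν 1 * x 1 := by
      intro x
      rw [hfℓ]
      simp [PiLp.inner_apply, Fin.sum_univ_two, RCLike.inner_apply]
      ring
    have hconst : ∀ t ∈ Icc c d, fℓ (β t) = fℓ (β c) := by
      intro t ht
      have h0 := hinner t ht c ⟨le_refl c, hcd.le⟩
      have h2 : fℓ (β t) - fℓ (β c) = 0 := by
        rw [hfℓ]
        simp only [innerSL_apply_apply]
        rw [← inner_sub_right, real_inner_comm]
        exact h0
      linarith
    have h1 : ∀ u ∈ Ioo c d, fℓ (f1 u) = 0 := by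
      intro u hu
      have hd1 : HasDerivAt (fun t => fℓ (β t)) (fℓ (f1 u)) u :=
        fℓ.hasFDerivAt.comp_hasDerivAt u (hder1 hab hreg u (hIoosub hu))
      have hev : (fun t => fℓ (β t)) =ᶠ[nhds u] (fun _ => fℓ (β c)) :=
        Filter.eventually_of_mem (Icc_mem_nhds hu.1 hu.2) hconst
      have hd1' : HasDerivAt (fun _ : ℝ => fℓ (β c)) (fℓ (f1 u)) u :=
        hd1.congr_of_eventuallyEq hev.symm
      exact ((hasDerivAt_const u (fℓ (β c))).unique hd1').symm
    have h2 : ∀ u ∈ Ioo c d, fℓ (f2 u) = 0 := by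
      intro u hu
      have hd2 : HasDerivAt (fun t => fℓ (f1 t)) (fℓ (f2 u)) u :=
        fℓ.hasFDerivAt.comp_hasDerivAt u (hder2 hab hC2 u (hIoosub hu))
      have hev : (fun t => fℓ (f1 t)) =ᶠ[nhds u] (fun _ => (0:ℝ)) :=
        Filter.eventually_of_mem (isOpen_Ioo.mem_nhds hu) h1
      have hd2' : HasDerivAt (fun _ : ℝ => (0:ℝ)) (fℓ (f2 u)) u :=
        hd2.congr_of_eventuallyEq hev.symm
      exact ((hasDerivAt_const u (0:ℝ)).unique hd2').symm
    intro u hu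
    have e1 : ν 0 * f1 u 0 + ν 1 * f1 u 1 = 0 := by rw [← hν]; exact h1 u hu
    have e2 : ν 0 * f2 u 0 + ν 1 * f2 u 1 = 0 := by rw [← hν]; exact h2 u hu
    have hFn0 : Fn u = 0 := by
      rcases E2_ne_zero hνne with hne | hne
      · have : ν 0 * Fn u = 0 := by
          rw [hFndef]
          linear_combination f2 u 1 * e1 - f1 u 1 * e2
        exact (mul_eq_zero.1 this).resolve_left hne
      · have : ν 1 * Fn u = 0 := by
          rw [hFndef]
          linear_combination f1 u 0 * e2 - f2 u 0 * e1
        exact (mul_eq_zero.1 this).resolve_left hne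
    rw [hFn0]

/-- Uniform separation: points closer than `δ` have distinct images. -/
lemma inj_sep (hab : a < b) (hC2 : ContDiffOn ℝ 2 β (Icc a b))
    (hreg : ∀ u ∈ Icc a b, deriv β u ≠ 0) :
    ∃ δ > 0, ∀ x y : ℝ, x ∈ Icc a b → y ∈ Icc a b → x < y → y - x < δ → β x ≠ β y := by
  set f1 : ℝ → E2 := derivWithin β (Icc a b) with hf1def
  have hf1c : ContinuousOn f1 (Icc a b) := hf1cont hab hC2
  have hf1ne : ∀ u ∈ Icc a b, f1 u ≠ 0 := by
    intro u hu
    rw [hf1def, heq_deriv hab hreg u hu]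
    exact hreg u hu
  obtain ⟨ε, hε, hεle⟩ := isCompact_Icc.exists_forall_le' hf1c.norm
    (fun u hu => norm_pos_iff.2 (hf1ne u hu))
  obtain ⟨uM, hM1, hM2⟩ := isCompact_Icc.exists_isMaxOn (nonempty_Icc.2 hab.le) hf1c.norm
  set M : ℝ := ‖f1 uM‖ with hMdef
  have hM : ∀ u ∈ Icc a b, ‖f1 u‖ ≤ M := fun u hu => hM2 hu
  have hMpos : 0 < M := lt_of_lt_of_le hε (hεle uM hM1)
  have uc := isCompact_Icc.uniformContinuousOn_of_continuous hf1c
  rw [Metric.uniformContinuousOn_iff] at uc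
  obtain ⟨δ, hδ, hucd⟩ := uc (ε * ε / (2 * M)) (by positivity)
  refine ⟨δ, hδ, ?_⟩
  intro x y hx hy hxy hyx heq
  have hsub : Icc x y ⊆ Icc a b := Icc_subset_Icc hx.1 hy.2
  have key : ∀ t ∈ Icc x y, (0:ℝ) < inner ℝ (f1 x) (f1 t) := by
    intro t ht
    have hdist : dist t x < δ := by
      rw [Real.dist_eq, abs_of_nonneg (by linarith [ht.1])]
      linarith [ht.2]
    have hgt := hucd t (hsub ht) x hx hdist
    rw [dist_eq_norm] at hgt
    have e1 : (inner ℝ (f1 x) (f1 t) : ℝ) = ‖f1 x‖ ^ 2 + inner ℝ (f1 x) (f1 t - f1 x) := by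
      rw [inner_sub_right, real_inner_self_eq_norm_sq]
      ring
    have e2 : |(inner ℝ (f1 x) (f1 t - f1 x) : ℝ)| ≤ ‖f1 x‖ * ‖f1 t - f1 x‖ :=
      abs_real_inner_le_norm _ _
    have e3 : ε ≤ ‖f1 x‖ := hεle x hx
    have e4 : ‖f1 x‖ ≤ M := hM x hx
    have e5 : ‖f1 t - f1 x‖ < ε * ε / (2 * M) := hgt
    have e6 : (0:ℝ) ≤ ‖f1 t - f1 x‖ := norm_nonneg _
    rw [e1]
    have e7 : ‖f1 x‖ * ‖f1 t - f1 x‖ ≤ M * (ε * ε / (2 * M)) := by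
      apply mul_le_mul e4 e5.le e6 hMpos.le
    have e8 : M * (ε * ε / (2 * M)) = ε * ε / 2 := by field_simp
    nlinarith [abs_le.1 e2]
  set ψ : ℝ → ℝ := fun t => (inner ℝ (f1 x) (β t) : ℝ) with hψdef
  have hψcont : ContinuousOn ψ (Icc x y) :=
    (innerSL ℝ (f1 x)).continuous.comp_continuousOn (hC2.continuousOn.mono hsub)
  have hψderiv : ∀ t ∈ Ioo x y, HasDerivAt ψ (inner ℝ (f1 x) (f1 t)) t := by
    intro t ht
    have htm : t ∈ Icc a b := hsub (Ioo_subset_Icc_self ht)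
    have hβd : HasDerivAt β (f1 t) t := by
      rw [hf1def, heq_deriv hab hreg t htm]
      exact (differentiableAt_of_deriv_ne_zero (hreg t htm)).hasDerivAt
    exact (innerSL ℝ (f1 x)).hasFDerivAt.comp_hasDerivAt t hβd
  have hmono : StrictMonoOn ψ (Icc x y) := by
    apply strictMonoOn_of_deriv_pos (convex_Icc x y) hψcont
    intro t ht
    rw [interior_Icc] at ht
    rw [(hψderiv t ht).deriv]
    exact key t (Ioo_subset_Icc_self ht)
  have : ψ x < ψ y := hmono ⟨le_refl x, hxy.le⟩ ⟨hxy.le, le_refl y⟩ hxy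
  rw [hψdef] at this
  simp only [heq] at this
  exact lt_irrefl _ this

/-- From adjacent strict increase we get monotonicity up to `n`. -/
lemma mono_of_lt_succ {t' : ℕ → ℝ} {n : ℕ} (h : ∀ j, j < n → t' j < t' (j+1)) :
    ∀ i j, i ≤ j → j ≤ n → t' i ≤ t' j := by
  intro i j hij hjn
  induction j with
  | zero =>
    rw [Nat.le_zero] at hij
    subst hij
    exact le_refl _
  | succ m ih =>
    rcases Nat.lt_succ_iff_lt_or_eq.1 (Nat.lt_succ_of_le hij) with hlt | heq2
    · exact le_trans (ih (Nat.lt_succ_iff.1 hlt) (by omega)) (h m (by omega)).le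
    · rw [heq2]

/-- Partition refinement: basic facts about the subdivided partition. -/
lemma refine_facts (t' : ℕ → ℝ) (n k : ℕ) (hk : 0 < k)
    (hmono : ∀ j, j < n → t' j < t' (j+1)) (i : ℕ) (hi : i < n * k) :
    i / k < n ∧
    (t' (i / k) + ((i % k : ℕ) : ℝ) * (t' (i / k + 1) - t' (i / k)) / k <
      t' ((i+1) / k) + (((i+1) % k : ℕ) : ℝ) * (t' ((i+1) / k + 1) - t' ((i+1) / k)) / k) ∧
    ((t' ((i+1) / k) + (((i+1) % k : ℕ) : ℝ) * (t' ((i+1) / k + 1) - t' ((i+1) / k)) / k) -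
      (t' (i / k) + ((i % k : ℕ) : ℝ) * (t' (i / k + 1) - t' (i / k)) / k)
        = (t' (i / k + 1) - t' (i / k)) / k) ∧
    t' (i / k) ≤ t' (i / k) + ((i % k : ℕ) : ℝ) * (t' (i / k + 1) - t' (i / k)) / k ∧
    (t' ((i+1) / k) + (((i+1) % k : ℕ) : ℝ) * (t' ((i+1) / k + 1) - t' ((i+1) / k)) / k
      ≤ t' (i / k + 1)) := by
  set q := i / k with hq
  set r := i % k with hr
  have hqn : q < n := by
    rw [hq, Nat.div_lt_iff_lt_mul hk]
    omega
  have hrk : r < k := Nat.mod_lt _ hk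
  have hik : i = r + q * k := by
    rw [hq, hr]
    exact ((Nat.mod_add_div i k).symm).trans (by ring)
  have hΔ : 0 < t' (q+1) - t' q := sub_pos.2 (hmono q hqn)
  have hkR : (0:ℝ) < (k:ℝ) := Nat.cast_pos.2 hk
  have hrR : (0:ℝ) ≤ (r:ℝ) := Nat.cast_nonneg r
  by_cases hcase : r + 1 < k
  · have hdiv : (i+1) / k = q := by
      rw [hik, show r + q * k + 1 = r + 1 + q * k by omega]
      rw [Nat.add_mul_div_right _ _ hk, Nat.div_eq_of_lt hcase]
      omega
    have hmod : (i+1) % k = r + 1 := by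
      rw [hik, show r + q * k + 1 = r + 1 + q * k by omega]
      rw [Nat.add_mul_mod_self_right, Nat.mod_eq_of_lt hcase]
    rw [hdiv, hmod]
    have hr1k : ((r:ℝ) + 1) ≤ (k:ℝ) := by
      have : (r:ℝ) + 1 < (k:ℝ) := by exact_mod_cast hcase
      linarith
    have h2 : ((r:ℝ) + 1) * (t' (q+1) - t' q) / k ≤ t' (q+1) - t' q := by
      rw [div_le_iff₀ hkR]
      nlinarith [hΔ, hr1k]
    have h3 : (0:ℝ) ≤ (r:ℝ) * (t' (q+1) - t' q) / k :=
      div_nonneg (mul_nonneg hrR hΔ.le) hkR.le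
    refine ⟨hqn, ?_, ?_, ?_, ?_⟩
    · push_cast
      have hexp : ((r:ℝ) + 1) * (t' (q+1) - t' q) / k
          = (r:ℝ) * (t' (q+1) - t' q) / k + (t' (q+1) - t' q) / k := by ring
      rw [hexp]
      linarith [div_pos hΔ hkR]
    · push_cast
      field_simp
      ring
    · linarith
    · push_cast
      linarith
  · have hr1 : r + 1 = k := by omega
    have hdiv : (i+1) / k = q + 1 := by
      rw [hik, show r + q * k + 1 = (q+1)*k by rw [← hr1]; ring]
      exact Nat.mul_div_cancel _ hk
    have hmod : (i+1) % k = 0 := by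
      rw [hik, show r + q * k + 1 = (q+1)*k by rw [← hr1]; ring]
      exact Nat.mul_mod_left _ _
    rw [hdiv, hmod]
    have hrR' : (r:ℝ) = (k:ℝ) - 1 := by
      have : ((r:ℝ) + 1) = (k:ℝ) := by exact_mod_cast hr1
      linarith
    have h2 : ((k:ℝ) - 1) * (t' (q+1) - t' q) / k < t' (q+1) - t' q := by
      rw [div_lt_iff₀ hkR]
      nlinarith [hΔ, hkR]
    have h3 : (0:ℝ) ≤ (r:ℝ) * (t' (q+1) - t' q) / k :=
      div_nonneg (mul_nonneg hrR hΔ.le) hkR.le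
    refine ⟨hqn, ?_, ?_, ?_, ?_⟩
    · simp only [Nat.cast_zero, zero_mul, zero_div, add_zero]
      rw [hrR']
      linarith
    · simp only [Nat.cast_zero, zero_mul, zero_div, add_zero]
      rw [hrR']
      field_simp
      ring
    · linarith
    · simp only [Nat.cast_zero, zero_mul, zero_div, add_zero]
      exact le_refl _

/-- An `n`-convex regular `C²` curve is a finite concatenation of sub-spirals: the
domain splits into finitely many subintervals on which `β` is injective and its signed
curvature does not change sign. -/
theorem nConvex_concat_subspirals (a b : ℝ) (hab : a < b) (n : ℕ)
    (β : ℝ → EuclideanSpace ℝ (Fin 2))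
    (hC2 : ContDiffOn ℝ 2 β (Icc a b))
    (hreg : ∀ u ∈ Icc a b, deriv β u ≠ 0)
    (hconv : NConvex β a b n) :
    ∃ m : ℕ, ∃ s : Fin (m + 1) → ℝ, StrictMono s ∧ s 0 = a ∧ s (Fin.last m) = b ∧
      ∀ j : Fin m,
        Set.InjOn β (Icc (s j.castSucc) (s j.succ)) ∧
          ((∀ u ∈ Icc (s j.castSucc) (s j.succ), 0 ≤ curvDet β u) ∨
            (∀ u ∈ Icc (s j.castSucc) (s j.succ), curvDet β u ≤ 0)) := by
  obtain ⟨t, htSM, ht0, htl, hApieces⟩ := hconv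
  have hn : 0 < n := by
    rcases Nat.eq_zero_or_pos n with h0 | h
    · subst h0
      rw [show (Fin.last 0) = 0 from rfl, ht0] at htl
      exact absurd htl (ne_of_lt hab)
    · exact h
  obtain ⟨δ, hδ, hsep⟩ := inj_sep hab hC2 hreg
  obtain ⟨k, hkgt⟩ := exists_nat_gt ((b - a)/δ)
  have hk : 0 < k := by
    have h1 : (0:ℝ) < (b - a)/δ := div_pos (by linarith) hδ
    have h2 : (0:ℝ) < (k:ℝ) := lt_trans h1 hkgt
    exact_mod_cast h2
  have hkR : (0:ℝ) < (k:ℝ) := Nat.cast_pos.2 hk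
  have hlen : (b - a)/k < δ := by
    rw [div_lt_iff₀ hkR]
    rw [div_lt_iff₀ hδ] at hkgt
    linarith [hkgt]
  set t' : ℕ → ℝ := fun j => if h : j ≤ n then t ⟨j, Nat.lt_succ_of_le h⟩ else b + (j - n)
    with ht'def
  have ht'eq : ∀ j (h : j ≤ n), t' j = t ⟨j, Nat.lt_succ_of_le h⟩ := fun j h => dif_pos h
  have ht'succ : ∀ j, j < n → t' j < t' (j+1) := by
    intro j hj
    rw [ht'eq j hj.le, ht'eq (j+1) hj]
    exact htSM (by simp [Fin.mk_lt_mk])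
  have ht'0 : t' 0 = a := by
    rw [ht'eq 0 (Nat.zero_le n), ← ht0]
    congr 1
  have ht'n : t' n = b := by
    rw [ht'eq n (le_refl n), ← htl]
    congr 1
  have ht'le := mono_of_lt_succ ht'succ
  set S : ℕ → ℝ := fun i => t' (i / k) + ((i % k : ℕ) : ℝ) * (t' (i / k + 1) - t' (i / k)) / k
    with hSdef
  refine ⟨n * k, fun i => S i.val, ?_, ?_, ?_, ?_⟩
  · rw [Fin.strictMono_iff_lt_succ]
    intro i
    simp only [Fin.coe_castSucc, Fin.val_succ]
    exact (refine_facts t' n k hk ht'succ i.val i.isLt).2.1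
  · show S ((0 : Fin (n * k + 1)) : ℕ) = a
    rw [Fin.val_zero, hSdef]
    simp only [Nat.zero_div, Nat.zero_mod, Nat.cast_zero, zero_mul, zero_div, add_zero]
    exact ht'0
  · show S ((Fin.last (n * k)) : ℕ) = b
    rw [Fin.val_last, hSdef]
    simp only [Nat.mul_div_cancel _ hk, Nat.mul_mod_left, Nat.cast_zero, zero_mul,
      zero_div, add_zero]
    exact ht'n
  · intro j
    obtain ⟨hq, hadj, hdiff, hlow, hhigh⟩ := refine_facts t' n k hk ht'succ j.val j.isLt
    have hvals : ((j.castSucc : Fin (n*k+1)) : ℕ) = j.val ∧ ((j.succ : Fin (n*k+1)) : ℕ) = j.val + 1 :=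
      ⟨rfl, rfl⟩
    set q := j.val / k with hqdef
    have hpc : Icc (S j.val) (S (j.val + 1)) ⊆ Icc (t' q) (t' (q+1)) :=
      Icc_subset_Icc hlow hhigh
    have hca : a ≤ t' q := by rw [← ht'0]; exact ht'le 0 q (Nat.zero_le q) hq.le
    have hdb2 : t' (q+1) ≤ b := by rw [← ht'n]; exact ht'le (q+1) n hq (le_refl n)
    have hcd2 : t' q < t' (q+1) := ht'succ q hq
    have hpiece_ab : Icc (t' q) (t' (q+1)) ⊆ Icc a b := Icc_subset_Icc hca hdb2
    obtain ⟨A, hA, hAfr⟩ := hApieces ⟨q, hq⟩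
    have hteq1 : t (Fin.castSucc ⟨q, hq⟩) = t' q := by
      rw [ht'eq q hq.le]
      rfl
    have hteq2 : t (Fin.succ ⟨q, hq⟩) = t' (q+1) := by
      rw [ht'eq (q+1) hq]
      rfl
    have hfr' : ∀ u ∈ Icc (t' q) (t' (q+1)), β u ∈ frontier A := by
      intro u hu
      apply hAfr
      exact mem_image_of_mem β (by rw [hteq1, hteq2]; exact hu)
    constructor
    · intro x hx y hy hbeq
      by_contra hne
      have hxab : x ∈ Icc a b := hpiece_ab (hpc hx)
      have hyab : y ∈ Icc a b := hpiece_ab (hpc hy)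
      have hlen2 : S (j.val + 1) - S j.val < δ := by
        rw [hdiff]
        have hΔba : t' (q+1) - t' q ≤ b - a := by linarith
        have h3 : (t' (q+1) - t' q)/k ≤ (b-a)/k := (div_le_div_iff_of_pos_right hkR).2 hΔba
        linarith
      rcases lt_or_gt_of_ne hne with hlt | hlt
      · exact hsep x y hxab hyab hlt (by
          have := hx.1; have := hy.2; simp only [hvals.1, hvals.2] at *
          linarith) hbeq
      · exact hsep y x hyab hxab hlt (by
          have := hy.1; have := hx.2; simp only [hvals.1, hvals.2] at *
          linarith) hbeq.symm
    · rcases curv_sign hab hC2 hreg hca hcd2 hdb2 hA hfr' with hs | hs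
      · left; intro u hu; exact hs u (hpc hu)
      · right; intro u hu; exact hs u (hpc hu)
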